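/- arXiv:1102.1093 — 2 statements merged into one kernel-verified Lean document; each statement's English description precedes it below -/
import Mathlib

section
/- Let J = (φ_0, qh, qg) ⊂ S = K[s,t] where deg φ_0 = d, deg q = m, deg h = deg g = d − m, the pair h, g has no common factor, and φ_0, qh, qg have no common factor. If d ≤ 2m, then the least k such that the multiplication map J_d ⊗ S_k → S_{d+k} is surjective is k = m − 1. -/
/- S = K[s,t]; J = (φ₀, qh, qg) with deg φ₀ = d, deg q = m, deg h = deg g = d−m.
Since all three generators have degree d, J_d is their K-span, and surjectivity
of the multiplication map J_d ⊗ S_k → S_{d+k} says exactly that every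
homogeneous form of degree d+k can be written α₀φ₀ + α₁(qh) + α₂(qg) with the
α_i homogeneous of degree k. -/

open MvPolynomial

variable (K : Type) [Field K]

/-- The multiplication map `J_d ⊗ S_k → S_{d+k}` for `J = (ψ₀, ψ₁, ψ₂)` (with
the `ψ_i` of degree `d`) is surjective. -/
def MulSurjAt (ψ₀ ψ₁ ψ₂ : MvPolynomial (Fin 2) K) (d k : ℕ) : Prop :=
  ∀ f : MvPolynomial (Fin 2) K, f.IsHomogeneous (d + k) →
    ∃ α₀ α₁ α₂ : MvPolynomial (Fin 2) K,
      α₀.IsHomogeneous k ∧ α₁.IsHomogeneous k ∧ α₂.IsHomogeneous k ∧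
      f = α₀ * ψ₀ + α₁ * ψ₁ + α₂ * ψ₂

abbrev HS (n : ℕ) : Submodule K (MvPolynomial (Fin 2) K) :=
  homogeneousSubmodule (Fin 2) K n

variable {K}

lemma fin2_degree (d : Fin 2 →₀ ℕ) : d.degree = d 0 + d 1 := by
  rw [Finsupp.degree_apply, Finset.sum_subset (Finset.subset_univ d.support)
    (fun i _ hi => by simpa using Finsupp.notMem_support_iff.mp hi)]
  exact Fin.sum_univ_two d

/-- the exponent vector `s^i t^(n-i)` -/
noncomputable def dv (n i : ℕ) : Fin 2 →₀ ℕ := Finsupp.single 0 i + Finsupp.single 1 (n - i)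

@[simp] lemma dv_apply0 (n i : ℕ) : dv n i 0 = i := by simp [dv]
@[simp] lemma dv_apply1 (n i : ℕ) : dv n i 1 = n - i := by simp [dv]

lemma dv_degree {n i : ℕ} (h : i ≤ n) : (dv n i).degree = n := by
  rw [fin2_degree]; simp; omega

lemma eq_dv {n : ℕ} {d : Fin 2 →₀ ℕ} (h : d.degree = n) : d = dv n (d 0) ∧ d 0 ≤ n := by
  rw [fin2_degree] at h
  constructor
  · ext i
    match i with
    | 0 => simp
    | 1 => simp; omega
  · omega

variable (K) in
/-- `S_n` is isomorphic to `K^(n+1)`. -/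
noncomputable def hsEquiv (n : ℕ) : (Fin (n + 1) → K) ≃ₗ[K] HS K n := by
  refine LinearEquiv.ofLinear
    { toFun := fun c => ⟨∑ i : Fin (n + 1), monomial (dv n (i : ℕ)) (c i), ?_⟩
      map_add' := ?_
      map_smul' := ?_ }
    { toFun := fun p i => coeff (dv n (i : ℕ)) p.1
      map_add' := ?_
      map_smul' := ?_ } ?_ ?_
  · rw [mem_homogeneousSubmodule]
    exact IsHomogeneous.sum _ _ _ fun i _ =>
      isHomogeneous_monomial _ (dv_degree (Nat.lt_succ_iff.mp i.isLt))
  · intro x y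
    apply Subtype.ext
    simp [Finset.sum_add_distrib]
  · intro c x
    apply Subtype.ext
    simp [Finset.smul_sum, smul_monomial]
  · intro x y; funext i; simp
  · intro c x; funext i; simp
  · ext p : 1
    apply Subtype.ext
    have hp : (p : MvPolynomial (Fin 2) K).IsHomogeneous n := p.2
    show (∑ i : Fin (n + 1), monomial (dv n (i : ℕ)) (coeff (dv n (i : ℕ)) p.1)) = p.1
    ext d
    rw [coeff_sum]
    by_cases hd : d.degree = n
    · obtain ⟨hd1, hd2⟩ := eq_dv hd
      rw [Finset.sum_eq_single (⟨d 0, Nat.lt_succ_of_le hd2⟩ : Fin (n + 1))]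
      · simp [coeff_monomial, ← hd1]
      · intro j _ hj
        rw [coeff_monomial, if_neg]
        intro hc
        apply hj
        have : (dv n (j : ℕ)) 0 = d 0 := by rw [hc]
        simp at this
        exact Fin.ext this
      · simp
    · rw [hp.coeff_eq_zero hd]
      apply Finset.sum_eq_zero
      intro j _
      rw [coeff_monomial, if_neg]
      intro hc
      exact hd (by rw [← hc]; exact dv_degree (Nat.lt_succ_iff.mp j.isLt))
  · apply LinearMap.ext
    intro c
    funext i
    show coeff (dv n (i : ℕ)) (∑ j : Fin (n + 1), monomial (dv n (j : ℕ)) (c j)) = c i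
    rw [coeff_sum, Finset.sum_eq_single i]
    · simp [coeff_monomial]
    · intro j _ hj
      rw [coeff_monomial, if_neg]
      intro hc
      apply hj
      have : (dv n (j : ℕ)) 0 = (dv n (i : ℕ)) 0 := by rw [hc]
      simp only [dv_apply0] at this
      exact Fin.ext this
    · simp

instance (n : ℕ) : FiniteDimensional K (HS K n) :=
  Module.Finite.equiv (hsEquiv K n)

lemma finrank_HS (n : ℕ) : Module.finrank K (HS K n) = n + 1 := by
  rw [← (hsEquiv K n).finrank_eq, Module.finrank_fin_fun]

lemma not_isUnit_of_homog {p : MvPolynomial (Fin 2) K} {n : ℕ}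
    (hp : p.IsHomogeneous n) (hn : n ≠ 0) : ¬ IsUnit p := by
  intro hu
  obtain ⟨y, hy⟩ := hu.exists_right_inv
  have h1 : constantCoeff (p * y) = 1 := by rw [hy]; simp
  rw [map_mul] at h1
  have h0 : constantCoeff p = 0 := by
    rw [constantCoeff_eq]
    exact hp.coeff_eq_zero (by simp [hn, Ne.symm hn])
  rw [h0, zero_mul] at h1
  exact zero_ne_one h1

lemma eq_C_of_homog0 {p : MvPolynomial (Fin 2) K} (hp : p.IsHomogeneous 0) :
    p = C (coeff 0 p) := by
  ext d
  by_cases hd : d = 0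
  · simp [hd]
  · rw [coeff_C, if_neg (Ne.symm hd), hp.coeff_eq_zero]
    rwa [Ne, Finsupp.degree_eq_zero_iff]

/-- a homogeneous divisor of a homogeneous polynomial has a homogeneous cofactor -/
lemma dvd_homog {v α : MvPolynomial (Fin 2) K} {b A : ℕ}
    (hv : v.IsHomogeneous b) (hα : α.IsHomogeneous A) (hd : v ∣ α) :
    ∃ w : MvPolynomial (Fin 2) K, w.IsHomogeneous (A - b) ∧ α = v * w := by
  obtain ⟨w, rfl⟩ := hd
  classical
  refine ⟨∑ i ∈ Finset.range (w.totalDegree + 1),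
    if A = b + i then homogeneousComponent i w else 0, ?_, ?_⟩
  · apply IsHomogeneous.sum
    intro i _
    by_cases hi : A = b + i
    · rw [if_pos hi]
      have : i = A - b := by omega
      rw [this]
      exact homogeneousComponent_isHomogeneous _ _
    · rw [if_neg hi]; exact isHomogeneous_zero _ _ _
  · have h1 : v * w = ∑ i ∈ Finset.range (w.totalDegree + 1),
        v * homogeneousComponent i w := by
      rw [← Finset.mul_sum, sum_homogeneousComponent]
    have h2 : v * w = homogeneousComponent A (v * w) := by
      rw [homogeneousComponent_of_mem ((mem_homogeneousSubmodule _ _).mpr hα), if_pos rfl]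
    calc v * w = homogeneousComponent A (v * w) := h2
      _ = ∑ i ∈ Finset.range (w.totalDegree + 1),
            homogeneousComponent A (v * homogeneousComponent i w) := by
          rw [h1, map_sum]
      _ = ∑ i ∈ Finset.range (w.totalDegree + 1),
            (if A = b + i then v * homogeneousComponent i w else 0) := by
          apply Finset.sum_congr rfl
          intro i _
          have hm : v * homogeneousComponent i w ∈ homogeneousSubmodule (Fin 2) K (b + i) :=
            (mem_homogeneousSubmodule _ _).mpr
              (hv.mul (homogeneousComponent_isHomogeneous i w))
          rw [homogeneousComponent_of_mem hm]
      _ = v * ∑ i ∈ Finset.range (w.totalDegree + 1),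
            (if A = b + i then homogeneousComponent i w else 0) := by
          rw [Finset.mul_sum]
          apply Finset.sum_congr rfl
          intro i _
          split <;> simp

variable (K) in
/-- the multiplication map `S_{n-a} × S_{n-b} → S_n`, `(α, β) ↦ αu + βv` -/
noncomputable def mulMap (u v : MvPolynomial (Fin 2) K) {a b n : ℕ}
    (hu : u.IsHomogeneous a) (hv : v.IsHomogeneous b) (ha : a ≤ n) (hb : b ≤ n) :
    (HS K (n - a) × HS K (n - b)) →ₗ[K] HS K n where
  toFun p := ⟨p.1.1 * u + p.2.1 * v, by
    rw [mem_homogeneousSubmodule]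
    have h1 : (p.1.1 * u).IsHomogeneous (n - a + a) :=
      IsHomogeneous.mul p.1.2 hu
    have h2 : (p.2.1 * v).IsHomogeneous (n - b + b) :=
      IsHomogeneous.mul p.2.2 hv
    rw [Nat.sub_add_cancel ha] at h1
    rw [Nat.sub_add_cancel hb] at h2
    exact h1.add h2⟩
  map_add' x y := by
    apply Subtype.ext
    show ((x.1 : MvPolynomial (Fin 2) K) + y.1) * u + ((x.2 : MvPolynomial (Fin 2) K) + y.2) * v
      = (x.1.1 * u + x.2.1 * v) + (y.1.1 * u + y.2.1 * v)
    ring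
  map_smul' c x := by
    apply Subtype.ext
    show (c • x.1.1) * u + (c • x.2.1) * v = c • (x.1.1 * u + x.2.1 * v)
    simp only [smul_add, smul_mul_assoc]

lemma mulMap_val (u v : MvPolynomial (Fin 2) K) {a b n : ℕ}
    (hu : u.IsHomogeneous a) (hv : v.IsHomogeneous b) (ha : a ≤ n) (hb : b ≤ n)
    (p : HS K (n - a) × HS K (n - b)) :
    (mulMap K u v hu hv ha hb p : MvPolynomial (Fin 2) K) = p.1.1 * u + p.2.1 * v := rfl


lemma surj2 {u v : MvPolynomial (Fin 2) K} {a b n : ℕ}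
    (hu : u.IsHomogeneous a) (hv : v.IsHomogeneous b) (hu0 : u ≠ 0) (hv0 : v ≠ 0)
    (hrel : IsRelPrime u v) (ha : a ≤ n) (hb : b ≤ n) (hab : a + b ≤ n + 1)
    {f : MvPolynomial (Fin 2) K} (hf : f.IsHomogeneous n) :
    ∃ α β : MvPolynomial (Fin 2) K, α.IsHomogeneous (n - a) ∧ β.IsHomogeneous (n - b) ∧
      f = α * u + β * v := by
  set Φ := mulMap K u v hu hv ha hb with hΦ
  -- the kernel has dimension (n+1) - (a+b)
  have hker : Module.finrank K (LinearMap.ker Φ) = n + 1 - (a + b) := by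
    rcases Nat.lt_or_ge n (a + b) with hcase | hcase
    · -- a + b = n + 1 : trivial kernel
      have : LinearMap.ker Φ = ⊥ := by
        rw [LinearMap.ker_eq_bot']
        rintro ⟨⟨α, hα⟩, ⟨β, hβ⟩⟩ hp
        have hval : α * u + β * v = 0 := congrArg Subtype.val hp
        have hαh : α.IsHomogeneous (n - a) := hα
        have hβh : β.IsHomogeneous (n - b) := hβ
        have hdvd : v ∣ α * u := ⟨-β, by linear_combination hval⟩
        have hvα : v ∣ α := hrel.symm.dvd_of_dvd_mul_right hdvd
        obtain ⟨w, hw, hαw⟩ := dvd_homog hv hαh hvα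
        have hα0 : α = 0 := by
          by_contra hα0
          have hw0 : w ≠ 0 := by rintro rfl; simp [hαw] at hα0
          have h1 : (v * w).IsHomogeneous (b + (n - a - b)) := hv.mul hw
          rw [← hαw] at h1
          have := hαh.inj_right h1 hα0
          omega
        have hβ0 : β = 0 := by
          rw [hα0, zero_mul, zero_add] at hval
          exact (mul_eq_zero.mp hval).resolve_right hv0
        apply Prod.ext <;> apply Subtype.ext <;> simp [hα0, hβ0]
      rw [this]
      simp
      omega
    · -- a + b ≤ n : kernel ≅ S_{n-a-b}
      have hxi : ∀ w : HS K (n - a - b),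
          (v * w.1).IsHomogeneous (n - a) ∧ (-(u * w.1)).IsHomogeneous (n - b) := by
        intro w
        have h1 : (v * w.1).IsHomogeneous (b + (n - a - b)) := hv.mul w.2
        have h2 : (u * w.1).IsHomogeneous (a + (n - a - b)) := hu.mul w.2
        have e1 : b + (n - a - b) = n - a := by omega
        have e2 : a + (n - a - b) = n - b := by omega
        rw [e1] at h1; rw [e2] at h2
        exact ⟨h1, h2.neg⟩
      set Ξ : HS K (n - a - b) →ₗ[K] (HS K (n - a) × HS K (n - b)) :=
        { toFun := fun w => (⟨v * w.1, (hxi w).1⟩, ⟨-(u * w.1), (hxi w).2⟩)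
          map_add' := by
            intro x y
            refine Prod.ext (Subtype.ext ?_) (Subtype.ext ?_)
            · show v * ((x : MvPolynomial (Fin 2) K) + (y : MvPolynomial (Fin 2) K))
                = v * (x : MvPolynomial (Fin 2) K) + v * (y : MvPolynomial (Fin 2) K)
              ring
            · show -(u * ((x : MvPolynomial (Fin 2) K) + (y : MvPolynomial (Fin 2) K)))
                = -(u * (x : MvPolynomial (Fin 2) K)) + -(u * (y : MvPolynomial (Fin 2) K))
              ring
          map_smul' := by
            intro c x
            refine Prod.ext (Subtype.ext ?_) (Subtype.ext ?_)
            · show v * (c • (x : MvPolynomial (Fin 2) K)) = c • (v * (x : MvPolynomial (Fin 2) K))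
              simp [Algebra.mul_smul_comm]
            · show -(u * (c • (x : MvPolynomial (Fin 2) K)))
                = c • (-(u * (x : MvPolynomial (Fin 2) K)))
              simp [Algebra.mul_smul_comm] } with hΞ
      have hinj : Function.Injective Ξ := by
        rw [← LinearMap.ker_eq_bot, LinearMap.ker_eq_bot']
        intro w hw0
        have h1 : v * (w : MvPolynomial (Fin 2) K) = 0 :=
          congrArg (Subtype.val ∘ Prod.fst) hw0
        have := (mul_eq_zero.mp h1).resolve_left hv0
        exact Subtype.ext this
      have hrange : LinearMap.range Ξ = LinearMap.ker Φ := by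
        apply le_antisymm
        · rintro p ⟨w, rfl⟩
          rw [LinearMap.mem_ker]
          apply Subtype.ext
          show v * (w : MvPolynomial (Fin 2) K) * u + -(u * (w : MvPolynomial (Fin 2) K)) * v
            = (0 : MvPolynomial (Fin 2) K)
          ring
        · rintro ⟨⟨α, hα⟩, ⟨β, hβ⟩⟩ hp
          rw [LinearMap.mem_ker] at hp
          have hval : α * u + β * v = 0 := congrArg Subtype.val hp
          have hαh : α.IsHomogeneous (n - a) := hα
          have hdvd : v ∣ α * u := ⟨-β, by linear_combination hval⟩
          obtain ⟨w, hw, hαw⟩ := dvd_homog hv hαh (hrel.symm.dvd_of_dvd_mul_right hdvd)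
          have hwdeg : w.IsHomogeneous (n - a - b) := hw
          have hβw : β = -(u * w) := by
            have h2 : (β + u * w) * v = 0 := by
              have : v * w * u + β * v = 0 := by rw [← hαw]; exact hval
              linear_combination this
            have := (mul_eq_zero.mp h2).resolve_right hv0
            linear_combination this
          exact ⟨⟨w, hwdeg⟩, by
            refine Prod.ext (Subtype.ext ?_) (Subtype.ext ?_)
            · show v * w = α; rw [hαw]
            · show -(u * w) = β; rw [hβw]⟩
      rw [← hrange, LinearMap.finrank_range_of_inj hinj, finrank_HS]
      omega
  have hrn := LinearMap.finrank_range_add_finrank_ker Φ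
  rw [Module.finrank_prod, finrank_HS, finrank_HS, hker] at hrn
  have htop : LinearMap.range Φ = ⊤ := by
    apply Submodule.eq_top_of_finrank_eq
    rw [finrank_HS]
    omega
  have hmem : (⟨f, hf⟩ : HS K n) ∈ LinearMap.range Φ := by rw [htop]; trivial
  obtain ⟨⟨⟨α, hα⟩, ⟨β, hβ⟩⟩, hp⟩ := hmem
  exact ⟨α, β, hα, hβ, (congrArg Subtype.val hp).symm⟩

lemma nonsurj {u v : MvPolynomial (Fin 2) K} {a b n : ℕ}
    (hu : u.IsHomogeneous a) (hv : v.IsHomogeneous b)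
    (ha : a ≤ n) (hb : b ≤ n) (hdim : (n - a + 1) + (n - b + 1) < n + 1) :
    ∃ f : MvPolynomial (Fin 2) K, f.IsHomogeneous n ∧
      ∀ α β : MvPolynomial (Fin 2) K, α.IsHomogeneous (n - a) → β.IsHomogeneous (n - b) →
        f ≠ α * u + β * v := by
  set Φ := mulMap K u v hu hv ha hb with hΦ
  have hne : LinearMap.range Φ ≠ ⊤ := by
    intro htop
    have h1 : Module.finrank K (LinearMap.range Φ) ≤ (n - a + 1) + (n - b + 1) := by
      have := LinearMap.finrank_range_le Φ
      rwa [Module.finrank_prod, finrank_HS, finrank_HS] at this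
    rw [htop, finrank_top, finrank_HS] at h1
    omega
  have hex : ∃ x : HS K n, x ∉ LinearMap.range Φ := by
    by_contra hall
    push_neg at hall
    exact hne (Submodule.eq_top_iff'.mpr hall)
  obtain ⟨x, hx⟩ := hex
  refine ⟨x.1, x.2, ?_⟩
  intro α β hα hβ hfeq
  apply hx
  exact ⟨(⟨α, hα⟩, ⟨β, hβ⟩), Subtype.ext hfeq.symm⟩

variable (K)

/-- if `d ≤ 2m`, the least `k` for which the multiplication map
`J_d ⊗ S_k → S_{d+k}` is surjective is `k = m − 1`. -/
theorem least_surjective_degree [IsAlgClosed K] (d m : ℕ) (hm : 1 ≤ m)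
    (hmd : m ≤ d) (hd2m : d ≤ 2 * m)
    (φ₀ q h g : MvPolynomial (Fin 2) K)
    (hφ₀ : φ₀.IsHomogeneous d) (hq : q.IsHomogeneous m)
    (hh : h.IsHomogeneous (d - m)) (hg : g.IsHomogeneous (d - m))
    (hhg : ∀ r : MvPolynomial (Fin 2) K, r ∣ h → r ∣ g → IsUnit r)
    (hcop : ∀ r : MvPolynomial (Fin 2) K, r ∣ φ₀ → r ∣ q * h → r ∣ q * g → IsUnit r) :
    IsLeast {k : ℕ | MulSurjAt K φ₀ (q * h) (q * g) d k} (m - 1) := by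
  have hd1 : 1 ≤ d := le_trans hm hmd
  have hq0 : q ≠ 0 := by
    intro hq0
    have : IsUnit φ₀ := hcop φ₀ dvd_rfl (by simp [hq0]) (by simp [hq0])
    exact not_isUnit_of_homog hφ₀ (by omega) this
  have hφ0 : φ₀ ≠ 0 := by
    intro hφ0
    have : IsUnit q := hcop q (by simp [hφ0]) (dvd_mul_right q h) (dvd_mul_right q g)
    exact not_isUnit_of_homog hq (by omega) this
  have relpq : IsRelPrime φ₀ q := fun r hr1 hr2 =>
    hcop r hr1 (dvd_mul_of_dvd_left hr2 h) (dvd_mul_of_dvd_left hr2 g)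
  constructor
  · -- membership : surjectivity at k = m - 1
    intro f hf
    obtain ⟨α, β, hα, hβ, hfeq⟩ := surj2 hφ₀ hq hφ0 hq0 relpq
      (Nat.le_add_right d (m - 1)) (by omega) (by omega) hf
    have e1 : d + (m - 1) - d = m - 1 := by omega
    have e2 : d + (m - 1) - m = d - 1 := by omega
    rw [e1] at hα; rw [e2] at hβ
    -- now split β = γ h + δ g
    have hstep : ∃ γ δ : MvPolynomial (Fin 2) K,
        γ.IsHomogeneous (m - 1) ∧ δ.IsHomogeneous (m - 1) ∧ β = γ * h + δ * g := by
      by_cases hh0 : h = 0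
      · have hgu : IsUnit g := hhg g (by simp [hh0]) dvd_rfl
        have hdm : d - m = 0 := by
          by_contra hne
          exact not_isUnit_of_homog hg hne hgu
        obtain ⟨c, hgC⟩ : ∃ c, g = C c := ⟨_, eq_C_of_homog0 (hdm ▸ hg)⟩
        have hc0 : c ≠ 0 := by
          intro h0
          rw [h0, map_zero] at hgC
          exact hgu.ne_zero hgC
        refine ⟨0, C c⁻¹ * β, isHomogeneous_zero _ _ _, ?_, ?_⟩
        · have := (isHomogeneous_C (Fin 2) (c⁻¹)).mul hβ
          rwa [show 0 + (d - 1) = m - 1 by omega] at this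
        · rw [hh0, mul_zero, zero_add, hgC, mul_comm (C c⁻¹) β, mul_assoc,
            ← C_mul, inv_mul_cancel₀ hc0, C_1, mul_one]
      · by_cases hg0 : g = 0
        · have hhu : IsUnit h := hhg h dvd_rfl (by simp [hg0])
          have hdm : d - m = 0 := by
            by_contra hne
            exact not_isUnit_of_homog hh hne hhu
          obtain ⟨c, hhC⟩ : ∃ c, h = C c := ⟨_, eq_C_of_homog0 (hdm ▸ hh)⟩
          have hc0 : c ≠ 0 := by
            intro h0
            rw [h0, map_zero] at hhC
            exact hhu.ne_zero hhC
          refine ⟨C c⁻¹ * β, 0, ?_, isHomogeneous_zero _ _ _, ?_⟩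
          · have := (isHomogeneous_C (Fin 2) (c⁻¹)).mul hβ
            rwa [show 0 + (d - 1) = m - 1 by omega] at this
          · rw [hg0, mul_zero, add_zero, hhC, mul_comm (C c⁻¹) β, mul_assoc,
              ← C_mul, inv_mul_cancel₀ hc0, C_1, mul_one]
        · obtain ⟨γ, δ, hγ, hδ, hβeq⟩ := surj2 hh hg hh0 hg0
            (fun r h1 h2 => hhg r h1 h2) (by omega) (by omega) (by omega) hβ
          rw [show d - 1 - (d - m) = m - 1 by omega] at hγ hδ
          exact ⟨γ, δ, hγ, hδ, hβeq⟩
    obtain ⟨γ, δ, hγ, hδ, hβeq⟩ := hstep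
    refine ⟨α, γ, δ, hα, hγ, hδ, ?_⟩
    rw [hfeq, hβeq]
    ring
  · -- lower bound
    intro k hk
    by_contra hlt
    push_neg at hlt
    obtain ⟨f, hf, hnot⟩ := nonsurj hφ₀ hq (Nat.le_add_right d k) (by omega) (by omega)
    obtain ⟨α₀, α₁, α₂, hα₀, hα₁, hα₂, heq⟩ := hk f hf
    refine hnot α₀ (α₁ * h + α₂ * g) ?_ ?_ ?_
    · rwa [show d + k - d = k by omega]
    · have := (hα₁.mul hh).add (hα₂.mul hg)
      rwa [show k + (d - m) = d + k - m by omega] at this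
    · rw [heq]; ring
end

section
/- Let X be the blow up of P^2 at 9 points. Every class E ∈ Cl(X) with E·L ≥ 0, E^2 = E·K_X = −1, and E·L ≤ 2·max_i(E·E_i) + 1 (the Ascenzi condition) satisfies E·L ≤ 26. -/
/- Cl(X) of the blow up of P^2 at 9 points, as Z^10: coordinate 0 is the
L-coefficient, coordinate i.succ the E_{i+1}-coefficient. -/

def inter9 (x y : Fin 10 → ℤ) : ℤ := x 0 * y 0 - ∑ i : Fin 9, x i.succ * y i.succ

def K9 : Fin 10 → ℤ := fun j => if j = 0 then -3 else 1

def L9 : Fin 10 → ℤ := fun j => if j = 0 then 1 else 0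

def Ei9 (i : Fin 9) : Fin 10 → ℤ := fun j => if j = i.succ then 1 else 0

/-- `max_i (E·E_i)`. -/
def maxm (E : Fin 10 → ℤ) : ℤ :=
  Finset.univ.sup' Finset.univ_nonempty (fun i : Fin 9 => inter9 E (Ei9 i))

lemma inter9_Ei9 (E : Fin 10 → ℤ) (i : Fin 9) : inter9 E (Ei9 i) = -E i.succ := by
  simp [inter9, Ei9, Fin.succ_inj, (Fin.succ_ne_zero i).symm]

lemma inter9_L9 (E : Fin 10 → ℤ) : inter9 E L9 = E 0 := by
  simp [inter9, L9, Fin.succ_ne_zero]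

/-- every class `E` with `E·L ≥ 0`, `E² = E·K_X = −1` and
`E·L ≤ 2·max_i(E·E_i) + 1` (the Ascenzi condition) satisfies `E·L ≤ 26`. -/
theorem ascenzi_degree_bound (E : Fin 10 → ℤ)
    (hd : 0 ≤ inter9 E L9) (hself : inter9 E E = -1) (hK : inter9 E K9 = -1)
    (hasc : inter9 E L9 ≤ 2 * maxm E + 1) :
    inter9 E L9 ≤ 26 := by
  set d : ℤ := E 0 with hd0
  set M : ℤ := maxm E with hM
  rw [inter9_L9] at hd hasc ⊢
  -- m i := E i.succ
  have hsum : ∑ i : Fin 9, E i.succ = 1 - 3 * d := by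
    have := hK
    simp [inter9, K9, Fin.succ_ne_zero] at this
    linarith
  have hsq : ∑ i : Fin 9, E i.succ * E i.succ = d ^ 2 + 1 := by
    have := hself
    simp only [inter9] at this
    nlinarith [this]
  -- the index achieving the max
  obtain ⟨i₀, -, hi₀⟩ := Finset.exists_mem_eq_sup' (Finset.univ_nonempty (α := Fin 9))
      (fun i : Fin 9 => inter9 E (Ei9 i))
  have hMe : M = -E i₀.succ := by rw [hM, maxm, hi₀, inter9_Ei9]
  have hle : ∀ i : Fin 9, -E i.succ ≤ M := by
    intro i
    rw [hM, maxm, ← inter9_Ei9]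
    exact Finset.le_sup' (fun i : Fin 9 => inter9 E (Ei9 i)) (Finset.mem_univ i)
  -- sums over univ.erase i₀
  have hmem : i₀ ∈ Finset.univ := Finset.mem_univ i₀
  have hs1 : ∑ i ∈ Finset.univ.erase i₀, E i.succ = (1 - 3 * d) - E i₀.succ := by
    rw [← hsum, ← Finset.add_sum_erase _ _ hmem]; ring
  have hs2 : ∑ i ∈ Finset.univ.erase i₀, E i.succ ^ 2 = (d ^ 2 + 1) - E i₀.succ ^ 2 := by
    have : ∑ i : Fin 9, E i.succ ^ 2 = d ^ 2 + 1 := by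
      simpa [sq] using hsq
    rw [← this, ← Finset.add_sum_erase _ _ hmem]; ring
  have hcard : (Finset.univ.erase i₀).card = 8 := by
    rw [Finset.card_erase_of_mem hmem]; simp
  have hCS := sq_sum_le_card_mul_sum_sq (s := Finset.univ.erase i₀)
      (f := fun i : Fin 9 => E i.succ)
  rw [hs1, hs2, hcard] at hCS
  push_cast at hCS
  -- combine: (1 - 3d + M)^2 ≤ 8 (d^2 + 1 - M^2), d ≤ 2M + 1
  have hM0 : E i₀.succ = -M := by linarith [hMe]
  rw [hM0] at hCS
  nlinarith [hCS, hasc, hd, sq_nonneg (2 * M - d + 1)]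
end
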